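/- Let n ≥ 1 and let μ be a nonzero finite Borel measure on the unit sphere S^n ⊂ ℝ^{n+1} which is atomless (μ({x}) = 0 for every point x ∈ S^n). Then there exists a point a in the open unit ball of ℝ^{n+1} such that the vector-valued integral ∫_{S^n} T_a(x) dμ(x) equals 0 ∈ ℝ^{n+1}. -/

import Mathlib

open scoped RealInnerProductSpace

/-- The Möbius transformation `T_a` of the unit sphere of `ℝ^{n+1}`, associated to a point
`a` of the open unit ball:
`T_a(x) = ((1-‖a‖²)·x + 2(1+⟨x,a⟩)·a) / ‖x+a‖²`. -/
noncomputable def mobius {n : ℕ} (a x : EuclideanSpace ℝ (Fin (n + 1))) :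
    EuclideanSpace ℝ (Fin (n + 1)) :=
  (‖x + a‖ ^ 2)⁻¹ • ((1 - ‖a‖ ^ 2) • x + (2 * (1 + ⟪x, a⟫)) • a)

open MeasureTheory Metric Filter Topology
open scoped ENNReal
set_option maxHeartbeats 1000000
set_option linter.unusedSectionVars false
set_option linter.unusedVariables false

namespace BalancingAux

variable {E : Type*} [NormedAddCommGroup E] [InnerProductSpace ℝ E]

/-- the potential integrand -/
noncomputable def gg (a x : E) : ℝ := Real.log (‖x + a‖ ^ 2) - Real.log (1 - ‖a‖ ^ 2)

/-- its gradient in `a` -/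
noncomputable def gradg (a x : E) : E :=
  (2 * (‖x + a‖ ^ 2)⁻¹) • (x + a) + (2 * (1 - ‖a‖ ^ 2)⁻¹) • a

lemma hasFDerivAt_norm_add_sq (x a : E) :
    HasFDerivAt (fun y : E => ‖x + y‖ ^ 2) (innerSL ℝ ((2 : ℝ) • (x + a))) a := by
  have h0 : HasFDerivAt (fun y : E => x + y) (ContinuousLinearMap.id ℝ E) a :=
    (hasFDerivAt_id a).const_add x
  have h := h0.inner ℝ h0
  have heq : (fun y : E => ⟪x + y, x + y⟫) = fun y : E => ‖x + y‖ ^ 2 := by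
    funext y; exact real_inner_self_eq_norm_sq _
  rw [heq] at h
  refine h.congr_fderiv ?_
  ext v
  simp only [innerSL_apply_apply, ContinuousLinearMap.comp_apply, ContinuousLinearMap.prod_apply,
    ContinuousLinearMap.id_apply, fderivInnerCLM_apply, real_inner_smul_left]
  rw [real_inner_comm]
  ring

lemma norm_add_pos_of_lt {x a : E} (hx : ‖x‖ = 1) (ha : ‖a‖ < 1) : 1 - ‖a‖ ≤ ‖x + a‖ := by
  have := norm_sub_norm_le x (-a)
  simpa [hx, sub_eq_add_neg] using this

lemma normsq_add_pos {x a : E} (hx : ‖x‖ = 1) (ha : ‖a‖ < 1) : 0 < ‖x + a‖ ^ 2 := by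
  have h1 : (0:ℝ) < 1 - ‖a‖ := by linarith
  have h2 := norm_add_pos_of_lt hx ha
  have : (0:ℝ) < ‖x + a‖ := lt_of_lt_of_le h1 h2
  positivity

lemma one_sub_normsq_pos {a : E} (ha : ‖a‖ < 1) : 0 < 1 - ‖a‖ ^ 2 := by
  nlinarith [norm_nonneg a]

lemma hasFDerivAt_gg (x : E) (hx : ‖x‖ = 1) {a : E} (ha : ‖a‖ < 1) :
    HasFDerivAt (fun a : E => gg a x) (innerSL ℝ (gradg a x)) a := by
  have hxa : (0:ℝ) < ‖x + a‖ ^ 2 := normsq_add_pos hx ha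
  have hsq : (0:ℝ) < 1 - ‖a‖ ^ 2 := one_sub_normsq_pos ha
  have h1 : HasFDerivAt (fun y : E => Real.log (‖x + y‖ ^ 2))
      ((‖x + a‖ ^ 2)⁻¹ • innerSL ℝ ((2 : ℝ) • (x + a))) a :=
    (hasFDerivAt_norm_add_sq x a).log hxa.ne'
  have h2' : HasFDerivAt (fun y : E => 1 - ‖y‖ ^ 2) (-(innerSL ℝ ((2 : ℝ) • a))) a := by
    have := hasFDerivAt_norm_add_sq (0 : E) a
    simp only [zero_add] at this
    simpa using (this.const_sub 1)
  have h2 : HasFDerivAt (fun y : E => Real.log (1 - ‖y‖ ^ 2))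
      ((1 - ‖a‖ ^ 2)⁻¹ • -(innerSL ℝ ((2 : ℝ) • a))) a := h2'.log hsq.ne'
  have h := h1.sub h2
  refine h.congr_fderiv ?_
  ext v
  simp only [gradg, innerSL_apply_apply, ContinuousLinearMap.sub_apply, ContinuousLinearMap.smul_apply,
    ContinuousLinearMap.neg_apply, innerSL_apply_apply, inner_add_left, real_inner_smul_left,
    smul_eq_mul]
  ring

namespace Euc

variable {n : ℕ}

local notation "E" => EuclideanSpace ℝ (Fin (n + 1))
local notation "S" => Metric.sphere (0 : EuclideanSpace ℝ (Fin (n + 1))) 1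

lemma norm_coe_sphere (x : S) : ‖(x : E)‖ = 1 := by
  have := x.2
  rwa [mem_sphere_zero_iff_norm] at this

lemma cont_gg {a : E} (ha : ‖a‖ < 1) : Continuous fun x : S => gg a (x : E) := by
  have hc : Continuous fun x : S => ‖(x : E) + a‖ ^ 2 :=
    ((continuous_subtype_val.add continuous_const).norm.pow 2)
  have hlog : Continuous fun x : S => Real.log (‖(x : E) + a‖ ^ 2) :=
    hc.log fun x => (normsq_add_pos (norm_coe_sphere x) ha).ne'
  exact hlog.sub continuous_const

lemma cont_gradg {a : E} (ha : ‖a‖ < 1) : Continuous fun x : S => gradg a (x : E) := by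
  have hadd : Continuous fun x : S => (x : E) + a := continuous_subtype_val.add continuous_const
  have hc : Continuous fun x : S => 2 * (‖(x : E) + a‖ ^ 2)⁻¹ :=
    continuous_const.mul ((hadd.norm.pow 2).inv₀
      fun x => (normsq_add_pos (norm_coe_sphere x) ha).ne')
  exact (hc.smul hadd).add continuous_const

lemma cont_innerSL_gradg {a : E} (ha : ‖a‖ < 1) :
    Continuous fun x : S => innerSL ℝ (gradg a (x : E)) :=
  (innerSL ℝ).continuous.comp (cont_gradg ha)

variable (μ : Measure (Metric.sphere (0 : EuclideanSpace ℝ (Fin (n + 1))) 1)) [IsFiniteMeasure μ]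

lemma integrable_cont {X : Type*} [NormedAddCommGroup X] {f : S → X} (hf : Continuous f) :
    Integrable f μ :=
  hf.integrable_of_hasCompactSupport ((isClosed_tsupport _).isCompact)

lemma norm_gradg_le {x a : E} (hx : ‖x‖ = 1) {r : ℝ} (har : ‖a‖ ≤ r) (hr : r < 1) :
    ‖gradg a x‖ ≤ 2 * (1 - r)⁻¹ + 2 * (1 - r ^ 2)⁻¹ := by
  have ha : ‖a‖ < 1 := lt_of_le_of_lt har hr
  have hxa : 1 - ‖a‖ ≤ ‖x + a‖ := norm_add_pos_of_lt hx ha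
  have hxa0 : (0:ℝ) < ‖x + a‖ := lt_of_lt_of_le (by linarith) hxa
  have hr0 : (0:ℝ) < 1 - r := by linarith
  have hr2 : (0:ℝ) < 1 - r ^ 2 := by nlinarith [norm_nonneg a]
  have h1 : ‖(2 * (‖x + a‖ ^ 2)⁻¹) • (x + a)‖ = 2 * ‖x + a‖⁻¹ := by
    rw [norm_smul, Real.norm_eq_abs, abs_of_nonneg (by positivity)]
    field_simp
  have h2 : ‖(2 * (1 - ‖a‖ ^ 2)⁻¹) • a‖ ≤ 2 * (1 - r ^ 2)⁻¹ := by
    rw [norm_smul, Real.norm_eq_abs]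
    have hsq : (0:ℝ) < 1 - ‖a‖ ^ 2 := one_sub_normsq_pos ha
    rw [abs_of_nonneg (by positivity)]
    have hmono : (1 - ‖a‖ ^ 2)⁻¹ ≤ (1 - r ^ 2)⁻¹ := by
      apply inv_anti₀ hr2
      nlinarith [norm_nonneg a]
    have h3 : (0:ℝ) ≤ (1 - ‖a‖ ^ 2)⁻¹ := by positivity
    nlinarith [norm_nonneg a, ha.le, inv_pos.2 hr2]
  calc ‖gradg a x‖ ≤ ‖(2 * (‖x + a‖ ^ 2)⁻¹) • (x + a)‖ + ‖(2 * (1 - ‖a‖ ^ 2)⁻¹) • a‖ :=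
        norm_add_le _ _
    _ ≤ 2 * (1 - r)⁻¹ + 2 * (1 - r ^ 2)⁻¹ := by
        rw [h1]
        have hmono : ‖x + a‖⁻¹ ≤ (1 - r)⁻¹ := inv_anti₀ hr0 (by linarith)
        linarith

lemma hasFDerivAt_energy {a : E} (ha : ‖a‖ < 1) :
    HasFDerivAt (fun a : E => ∫ x : S, gg a (x : E) ∂μ)
      (innerSL ℝ (∫ x : S, gradg a (x : E) ∂μ)) a := by
  set ε : ℝ := (1 - ‖a‖) / 2 with hε_def
  have hε : 0 < ε := by simp only [hε_def]; linarith
  set r : ℝ := (1 + ‖a‖) / 2 with hr_def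
  have hr : r < 1 := by simp only [hr_def]; linarith
  have hball : ∀ a' ∈ ball a ε, ‖a'‖ ≤ r := by
    intro a' ha'
    rw [mem_ball] at ha'
    have : ‖a' - a‖ < ε := by rwa [dist_eq_norm] at ha'
    calc ‖a'‖ ≤ ‖a' - a‖ + ‖a‖ := by
          simpa using norm_add_le (a' - a) a
      _ ≤ r := by simp only [hr_def, hε_def] at *; linarith
  have key := hasFDerivAt_integral_of_dominated_of_fderiv_le
    (F := fun (a : E) (x : S) => gg a (x : E))
    (F' := fun (a : E) (x : S) => innerSL ℝ (gradg a (x : E)))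
    (bound := fun _ : S => 2 * (1 - r)⁻¹ + 2 * (1 - r ^ 2)⁻¹)
    (x₀ := a) (μ := μ) (ball_mem_nhds a hε)
    ?_ ?_ ?_ ?_ ?_ ?_
  · refine key.congr_fderiv (Eq.symm ?_)
    have hint : Integrable (fun x : S => gradg a (x : E)) μ := integrable_cont μ (cont_gradg ha)
    have hint2 : Integrable (fun x : S => innerSL ℝ (gradg a (x : E))) μ :=
      integrable_cont μ (cont_innerSL_gradg ha)
    refine ContinuousLinearMap.ext fun v => ?_
    rw [ContinuousLinearMap.integral_apply hint2]
    simp only [innerSL_apply_apply]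
    rw [real_inner_comm, ← integral_inner hint v]
    simp_rw [real_inner_comm v]
  · filter_upwards [isOpen_ball.mem_nhds (mem_ball_zero_iff.2 ha)] with a' ha'
    exact (cont_gg (mem_ball_zero_iff.1 ha')).aestronglyMeasurable
  · exact integrable_cont μ (cont_gg ha)
  · exact (cont_innerSL_gradg ha).aestronglyMeasurable
  · refine Eventually.of_forall fun x => fun a' ha' => ?_
    rw [innerSL_apply_norm]
    exact norm_gradg_le (norm_coe_sphere x) (hball a' ha') hr
  · exact integrable_const _
  · refine Eventually.of_forall fun x => fun a' ha' => ?_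
    exact hasFDerivAt_gg (x : E) (norm_coe_sphere x) (lt_of_le_of_lt (hball a' ha') hr)

lemma exists_radius (μ : Measure (Metric.sphere (0 : EuclideanSpace ℝ (Fin (n + 1))) 1))
    [IsFiniteMeasure μ] (hμ : μ ≠ 0)
    (hatom : ∀ x : Metric.sphere (0 : EuclideanSpace ℝ (Fin (n + 1))) 1, μ {x} = 0) :
    ∃ r : ℝ, 0 < r ∧ r < 1 ∧ ∀ a : E, r ≤ ‖a‖ → ‖a‖ < 1 →
      (∫ x : S, gg (0 : E) (x : E) ∂μ) < ∫ x : S, gg a (x : E) ∂μ := by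
  set f : E → ℝ := fun a => ∫ x : S, gg a (x : E) ∂μ with hf_def
  set M : ℝ := (μ Set.univ).toReal with hM_def
  have hMpos : 0 < M := by
    rw [hM_def]
    have h1 : μ Set.univ ≠ 0 := by
      simpa [Measure.measure_univ_eq_zero] using hμ
    exact ENNReal.toReal_pos h1 (measure_ne_top μ _)
  by_contra hcon
  push_neg at hcon
  have hcon' : ∀ k : ℕ, ∃ a : E, 1 - 1 / ((k : ℝ) + 1) ≤ ‖a‖ ∧ ‖a‖ < 1 ∧ f a ≤ f 0 := by
    intro k
    have hkpos : (0:ℝ) < 1 / ((k : ℝ) + 1) := by positivity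
    obtain ⟨a, h1, h2, h3⟩ := hcon (max (1/2) (1 - 1 / ((k : ℝ) + 1)))
      (lt_max_of_lt_left (by norm_num)) (max_lt (by norm_num) (by linarith))
    exact ⟨a, le_trans (le_max_right _ _) h1, h2, h3⟩
  choose u hu1 hu2 hu3 using hcon'
  have hcball : ∀ k, u k ∈ Metric.closedBall (0 : E) 1 := fun k =>
    mem_closedBall_zero_iff.2 (hu2 k).le
  obtain ⟨b, hbmem, φ, hφ, hconv⟩ := (isCompact_closedBall (0 : E) 1).tendsto_subseq hcball
  have hcast : Tendsto (fun m : ℕ => ((m : ℝ) + 1)) atTop atTop :=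
    tendsto_atTop_add_const_right atTop 1 (tendsto_natCast_atTop_atTop (R := ℝ))
  have hφtop : Tendsto (fun k => ((φ k : ℝ) + 1)) atTop atTop :=
    hcast.comp hφ.tendsto_atTop
  have hnorm : Tendsto (fun k => ‖u (φ k)‖) atTop (𝓝 ‖b‖) := hconv.norm
  have hb1 : ‖b‖ = 1 := by
    have hle : ‖b‖ ≤ 1 := le_of_tendsto' hnorm fun k => (hu2 (φ k)).le
    have hlow : Tendsto (fun k => 1 - 1 / ((φ k : ℝ) + 1)) atTop (𝓝 1) := by
      have h0 : Tendsto (fun k => 1 / ((φ k : ℝ) + 1)) atTop (𝓝 0) := by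
        simpa [Function.comp_def] using tendsto_inv_atTop_zero.comp hφtop
      simpa using tendsto_const_nhds.sub h0
    have hge : 1 ≤ ‖b‖ := le_of_tendsto_of_tendsto' hlow hnorm fun k => hu1 (φ k)
    linarith
  have hbS : -b ∈ Metric.sphere (0 : EuclideanSpace ℝ (Fin (n + 1))) 1 := by
    rw [mem_sphere_zero_iff_norm, norm_neg, hb1]
  set A : ℕ → Set (Metric.sphere (0 : EuclideanSpace ℝ (Fin (n + 1))) 1) :=
    fun m => {x : S | ‖(x : E) + b‖ ≤ 1 / ((m : ℝ) + 1)} with hA_def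
  have hAclosed : ∀ m, IsClosed (A m) := by
    intro m
    exact isClosed_le ((continuous_subtype_val.add continuous_const).norm) continuous_const
  have hAmeas : ∀ m, MeasurableSet (A m) := fun m => (hAclosed m).measurableSet
  have hAanti : Antitone A := by
    intro m m' hmm x hx
    simp only [hA_def, Set.mem_setOf_eq] at hx ⊢
    refine le_trans hx ?_
    apply one_div_le_one_div_of_le (by positivity)
    have : (m : ℝ) ≤ (m' : ℝ) := Nat.cast_le.2 hmm
    linarith
  have h0seq : Tendsto (fun m : ℕ => 1 / ((m : ℝ) + 1)) atTop (𝓝 0) := by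
    simpa [Function.comp_def] using tendsto_inv_atTop_zero.comp hcast
  have hiInter : (⋂ m, A m) ⊆ {(⟨-b, hbS⟩ : S)} := by
    intro x hx
    simp only [Set.mem_iInter, hA_def, Set.mem_setOf_eq] at hx
    have hx0 : ‖(x : E) + b‖ ≤ 0 := ge_of_tendsto' h0seq hx
    have hx0' : (x : E) + b = 0 := norm_eq_zero.1 (le_antisymm hx0 (norm_nonneg _))
    have : (x : E) = -b := eq_neg_of_add_eq_zero_left hx0'
    simp [Set.mem_singleton_iff, Subtype.ext_iff, this]
  have hμiInter : μ (⋂ m, A m) = 0 :=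
    measure_mono_null hiInter (hatom _)
  have htend : Tendsto (μ ∘ A) atTop (𝓝 0) := by
    have := tendsto_measure_iInter_atTop (μ := μ)
      (fun m => (hAmeas m).nullMeasurableSet) hAanti ⟨0, measure_ne_top μ _⟩
    rwa [hμiInter] at this
  have hquarter : (0 : ℝ≥0∞) < μ Set.univ / 4 := by
    apply ENNReal.div_pos
    · simpa [Measure.measure_univ_eq_zero] using hμ
    · norm_num
  obtain ⟨m₀, hm₀⟩ := (htend.eventually_lt_const hquarter).exists
  set ρ : ℝ := 1 / ((m₀ : ℝ) + 1) with hρ_def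
  have hρpos : 0 < ρ := by positivity
  set A₀ := A m₀ with hA₀_def
  have hA₀meas : MeasurableSet A₀ := hAmeas m₀
  have hmA : (μ A₀).toReal ≤ M / 4 := by
    have h1 : (μ A₀).toReal ≤ (μ Set.univ / 4).toReal :=
      ENNReal.toReal_mono (ENNReal.div_lt_top (measure_ne_top μ _) (by norm_num)).ne hm₀.le
    have h2 : (μ Set.univ / 4).toReal = M / 4 := by
      rw [ENNReal.toReal_div, hM_def]
      norm_num
    linarith
  have hsplit : (μ A₀).toReal + (μ A₀ᶜ).toReal = M := by
    rw [← ENNReal.toReal_add (measure_ne_top μ _) (measure_ne_top μ _),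
      measure_add_measure_compl hA₀meas]
  have hmAc : 3 * M / 4 ≤ (μ A₀ᶜ).toReal := by linarith
  set lρ : ℝ := Real.log ((ρ / 2) ^ 2) with hlρ_def
  set X : ℝ := min lρ ((3 * M / 4 * lρ - M / 2 * Real.log 2 - f 0) * (2 / M)) with hX_def
  have ev1 : ∀ᶠ k in atTop, ‖u (φ k) - b‖ ≤ ρ / 2 := by
    have := hconv.eventually_mem (Metric.closedBall_mem_nhds b (by positivity : 0 < ρ / 2))
    filter_upwards [this] with k hk
    simpa [mem_closedBall, dist_eq_norm] using hk
  have ev2 : ∀ᶠ k in atTop, 1 - ‖u (φ k)‖ ^ 2 < Real.exp X := by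
    have hT : Tendsto (fun k => 1 - ‖u (φ k)‖ ^ 2) atTop (𝓝 (1 - ‖b‖ ^ 2)) :=
      tendsto_const_nhds.sub (hnorm.pow 2)
    rw [hb1] at hT
    norm_num at hT
    exact hT.eventually_lt_const (Real.exp_pos X)
  obtain ⟨k, hk1, hk2⟩ := (ev1.and ev2).exists
  set a' : E := u (φ k) with ha'_def
  set t : ℝ := ‖a'‖ with ht_def
  have ht1 : t < 1 := hu2 (φ k)
  have ht0 : 0 ≤ t := norm_nonneg _
  have h1t2 : 0 < 1 - t ^ 2 := by nlinarith
  set L : ℝ := Real.log (1 - t ^ 2) with hL_def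
  have hLX : L < X := (Real.log_lt_iff_lt_exp h1t2).2 hk2
  have hgint : Integrable (fun x : S => gg a' (x : E)) μ := integrable_cont μ (cont_gg ht1)
  -- bound on A₀
  have hbd1 : ∀ x ∈ A₀, Real.log ((1 - t) ^ 2) - L ≤ gg a' (x : E) := by
    intro x _
    have hxa : 1 - t ≤ ‖(x : E) + a'‖ := norm_add_pos_of_lt (norm_coe_sphere x) ht1
    have h1t : (0:ℝ) < 1 - t := by linarith
    have hsq : (1 - t) ^ 2 ≤ ‖(x : E) + a'‖ ^ 2 := by nlinarith [norm_nonneg ((x : E) + a')]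
    have := Real.log_le_log (by positivity) hsq
    simp only [gg, hL_def]
    have ht2 : ‖a'‖ ^ 2 = t ^ 2 := by rw [ht_def]
    rw [ht2]
    linarith
  -- bound on A₀ᶜ
  have hbd2 : ∀ x ∈ A₀ᶜ, lρ - L ≤ gg a' (x : E) := by
    intro x hx
    have hxρ : ρ < ‖(x : E) + b‖ := by
      by_contra hle
      push_neg at hle
      exact hx (by simpa [hA₀_def, hA_def, hρ_def] using hle)
    have hdist : ‖(x : E) + a'‖ ≥ ρ / 2 := by
      have h1 : ‖(x : E) + b‖ - ‖b - a'‖ ≤ ‖((x : E) + b) - (b - a')‖ := norm_sub_norm_le _ _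
      have h2 : ((x : E) + b) - (b - a') = (x : E) + a' := by abel
      rw [h2] at h1
      have h3 : ‖b - a'‖ = ‖a' - b‖ := norm_sub_rev _ _
      linarith [hk1, h1, h3.ge, h3.le]
    have hsq : (ρ / 2) ^ 2 ≤ ‖(x : E) + a'‖ ^ 2 := by nlinarith [norm_nonneg ((x : E) + a'), hρpos]
    have := Real.log_le_log (by positivity) hsq
    simp only [gg, hL_def, hlρ_def]
    have ht2 : ‖a'‖ ^ 2 = t ^ 2 := by rw [ht_def]
    rw [ht2]
    linarith
  have hint1 : (Real.log ((1 - t) ^ 2) - L) * (μ A₀).toReal ≤ ∫ x in A₀, gg a' (x : E) ∂μ :=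
    by have h := setIntegral_ge_of_const_le_real hA₀meas (measure_ne_top μ _) hbd1 hgint.integrableOn
       exact h
  have hint2 : (lρ - L) * (μ A₀ᶜ).toReal ≤ ∫ x in A₀ᶜ, gg a' (x : E) ∂μ :=
    by have h := setIntegral_ge_of_const_le_real hA₀meas.compl (measure_ne_top μ _) hbd2 hgint.integrableOn
       exact h
  have hfsplit : f a' = (∫ x in A₀, gg a' (x : E) ∂μ) + ∫ x in A₀ᶜ, gg a' (x : E) ∂μ :=
    (integral_add_compl hA₀meas hgint).symm
  -- arithmetic
  have hc1 : Real.log ((1 - t) ^ 2) - L ≤ 0 := by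
    apply sub_nonpos.2
    apply Real.log_le_log (by nlinarith)
    nlinarith
  have hc1' : L - 2 * Real.log 2 ≤ Real.log ((1 - t) ^ 2) - L := by
    have h1 : (1 - t ^ 2) / 2 ≤ 1 - t := by nlinarith
    have h2 : Real.log ((1 - t ^ 2) / 2) ≤ Real.log (1 - t) := Real.log_le_log (by positivity) h1
    have h3 : Real.log ((1 - t ^ 2) / 2) = L - Real.log 2 := by
      rw [hL_def, Real.log_div h1t2.ne' (by norm_num)]
    have h4 : Real.log ((1 - t) ^ 2) = 2 * Real.log (1 - t) := by
      rw [Real.log_pow]; push_cast; ring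
    nlinarith [h2, h3, h4]
  have hc2 : 0 ≤ lρ - L := by
    have : L < lρ := lt_of_lt_of_le hLX (min_le_left _ _)
    linarith
  have hmul1 : (Real.log ((1 - t) ^ 2) - L) * (M / 4) ≤
      (Real.log ((1 - t) ^ 2) - L) * (μ A₀).toReal :=
    mul_le_mul_of_nonpos_left hmA hc1
  have hmul1' : (L - 2 * Real.log 2) * (M / 4) ≤ (Real.log ((1 - t) ^ 2) - L) * (M / 4) :=
    mul_le_mul_of_nonneg_right hc1' (by linarith)
  have hmul2 : (lρ - L) * (3 * M / 4) ≤ (lρ - L) * (μ A₀ᶜ).toReal :=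
    mul_le_mul_of_nonneg_left hmAc hc2
  have hXbound : L < (3 * M / 4 * lρ - M / 2 * Real.log 2 - f 0) * (2 / M) :=
    lt_of_lt_of_le hLX (min_le_right _ _)
  have hfinal : f 0 < f a' := by
    have hML : M / 2 * L < 3 * M / 4 * lρ - M / 2 * Real.log 2 - f 0 := by
      have := mul_lt_mul_of_pos_left hXbound (by positivity : (0:ℝ) < M / 2)
      calc M / 2 * L < M / 2 * ((3 * M / 4 * lρ - M / 2 * Real.log 2 - f 0) * (2 / M)) := this
        _ = 3 * M / 4 * lρ - M / 2 * Real.log 2 - f 0 := by field_simp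
    rw [hfsplit]
    nlinarith [hint1, hint2, hmul1, hmul1', hmul2]
  exact absurd (hu3 (φ k)) (not_le.2 hfinal)

lemma gradg_eq_smul_mobius {a x : E} (hx : ‖x‖ = 1) (ha : ‖a‖ < 1) :
    gradg a x = (2 * (1 - ‖a‖ ^ 2)⁻¹) • mobius a x := by
  have hN : ‖x + a‖ ^ 2 = 1 + 2 * ⟪x, a⟫ + ‖a‖ ^ 2 := by
    rw [norm_add_sq_real, hx]; norm_num
  have hN0 : ‖x + a‖ ^ 2 ≠ 0 := (normsq_add_pos hx ha).ne'
  have hs0 : 1 - ‖a‖ ^ 2 ≠ 0 := (one_sub_normsq_pos ha).ne'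
  simp only [gradg, mobius]
  match_scalars
  · field_simp
  · field_simp
    have hS : (∑ i : Fin (n + 1), x i * a i) = ⟪x, a⟫ := by simp [PiLp.inner_apply, mul_comm]
    rw [div_add_one hN0, div_left_inj' hN0]
    linear_combination hN

lemma main (μ : Measure (Metric.sphere (0 : EuclideanSpace ℝ (Fin (n + 1))) 1))
    [IsFiniteMeasure μ] (hμ : μ ≠ 0)
    (hatom : ∀ x : Metric.sphere (0 : EuclideanSpace ℝ (Fin (n + 1))) 1, μ {x} = 0) :
    ∃ a ∈ Metric.ball (0 : EuclideanSpace ℝ (Fin (n + 1))) 1,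
      ∫ x : S, mobius a (x : E) ∂μ = 0 := by
  obtain ⟨r, hr0, hr1, hrgt⟩ := exists_radius μ hμ hatom
  have hcont : ContinuousOn (fun a : E => ∫ x : S, gg a (x : E) ∂μ)
      (Metric.closedBall (0 : E) r) := by
    intro a ha
    have h1 : ‖a‖ < 1 := lt_of_le_of_lt (mem_closedBall_zero_iff.1 ha) hr1
    exact (hasFDerivAt_energy μ h1).continuousAt.continuousWithinAt
  obtain ⟨a₀, ha₀K, hmin⟩ := (isCompact_closedBall (0 : E) r).exists_isMinOn
    ⟨0, mem_closedBall_self hr0.le⟩ hcont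
  have ha₀ : ‖a₀‖ < 1 := lt_of_le_of_lt (mem_closedBall_zero_iff.1 ha₀K) hr1
  have hlocal : IsLocalMin (fun a : E => ∫ x : S, gg a (x : E) ∂μ) a₀ := by
    filter_upwards [isOpen_ball.mem_nhds (mem_ball_zero_iff.2 ha₀)] with a ha
    rcases le_or_gt ‖a‖ r with h | h
    · exact hmin (mem_closedBall_zero_iff.2 h)
    · exact le_of_lt (lt_of_le_of_lt (hmin (mem_closedBall_self hr0.le))
        (hrgt a h.le (mem_ball_zero_iff.1 ha)))
  have hzero := hlocal.hasFDerivAt_eq_zero (hasFDerivAt_energy μ ha₀)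
  set V : E := ∫ x : S, gradg a₀ (x : E) ∂μ with hV_def
  have hVzero : V = 0 := by
    have h1 : innerSL ℝ V V = (0 : ℝ) := by rw [hzero]; simp
    have h2 : ‖V‖ ^ 2 = 0 := by
      rw [← real_inner_self_eq_norm_sq]
      simpa using h1
    simpa using h2
  have hgradmob : (fun x : S => gradg a₀ (x : E)) =
      fun x : S => (2 * (1 - ‖a₀‖ ^ 2)⁻¹) • mobius a₀ (x : E) := by
    funext x
    exact gradg_eq_smul_mobius (norm_coe_sphere x) ha₀
  have hVint : V = (2 * (1 - ‖a₀‖ ^ 2)⁻¹) • ∫ x : S, mobius a₀ (x : E) ∂μ := by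
    rw [hV_def, hgradmob, integral_smul]
  have hc : (2 * (1 - ‖a₀‖ ^ 2)⁻¹) ≠ 0 := by
    have h := one_sub_normsq_pos ha₀
    have h2 : (0:ℝ) < 2 * (1 - ‖a₀‖ ^ 2)⁻¹ := by positivity
    exact h2.ne'
  refine ⟨a₀, mem_ball_zero_iff.2 ha₀, ?_⟩
  have hfin := hVzero
  rw [hVint] at hfin
  rcases smul_eq_zero.1 hfin with h | h
  · exact absurd h hc
  · exact h

end Euc
end BalancingAux

/-- Hersch–Yang–Yau balancing lemma, measure-theoretic form: if `μ` is a nonzero finite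
atomless Borel measure on the unit sphere `S^n ⊂ ℝ^{n+1}`, `n ≥ 1`, then there is a point
`a` of the open unit ball such that `∫_{S^n} T_a(x) dμ(x) = 0`. -/
theorem balancing_lemma (n : ℕ) (hn : 1 ≤ n)
    (μ : MeasureTheory.Measure (Metric.sphere (0 : EuclideanSpace ℝ (Fin (n + 1))) 1))
    [MeasureTheory.IsFiniteMeasure μ] (hμ : μ ≠ 0)
    (hatomless : ∀ x : Metric.sphere (0 : EuclideanSpace ℝ (Fin (n + 1))) 1, μ {x} = 0) :
    ∃ a ∈ Metric.ball (0 : EuclideanSpace ℝ (Fin (n + 1))) 1,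
      ∫ x : Metric.sphere (0 : EuclideanSpace ℝ (Fin (n + 1))) 1,
        mobius a (x : EuclideanSpace ℝ (Fin (n + 1))) ∂μ = 0 := by
  exact BalancingAux.Euc.main μ hμ hatomless
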